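/- For a higher-order rewrite system X, the locally-preordered 2-category R(X) — with objects the types over X0, morphisms λ-terms modulo βη, and a unique 2-cell M → N exactly when M rewrites to N in finitely many steps — is cartesian closed as a 2-category. -/

import Mathlib

/-! Syntax of the 2-λ-calculus over a 2-signature, following
"Cartesian closed 2-categories and permutation equivalence in
higher-order rewriting". -/

/-- Simple types over a set `S` of sorts: `A ::= s | 1 | A × B | B^A`
(`arr A B` denotes `B^A`). -/
inductive Ty (S : Type) : Type
  | base (s : S)
  | unit
  | prod (A B : Ty S)
  | arr (A B : Ty S)

/-- A 1-signature over a fixed set `S` of sorts: operations with arities. -/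
structure Sig1 (S : Type) : Type 1 where
  Op : Type
  opCtx : Op → List (Ty S)
  opTy : Op → Ty S

variable {S : Type}

/-- Raw λ-terms (de Bruijn indices) over a 1-signature.  Constant
application `const c args` applies an operation to a tuple of terms
(indices `≥ arity` are ignored by the typing rules). -/
inductive Tm (Sg : Sig1 S) : Type
  | var (n : ℕ)
  | unit
  | pair (M N : Tm Sg)
  | fst (M : Tm Sg)
  | snd (M : Tm Sg)
  | lam (A : Ty S) (M : Tm Sg)
  | app (M N : Tm Sg)
  | const (c : Sg.Op) (args : ℕ → Tm Sg)

namespace Tm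

variable {Sg : Sig1 S}

/-- Lift a renaming under a binder. -/
def liftRen (f : ℕ → ℕ) : ℕ → ℕ
  | 0 => 0
  | n + 1 => f n + 1

/-- Renaming of variables. -/
def ren (f : ℕ → ℕ) : Tm Sg → Tm Sg
  | var n => var (f n)
  | unit => unit
  | pair M N => pair (M.ren f) (N.ren f)
  | fst M => fst (M.ren f)
  | snd M => snd (M.ren f)
  | lam A M => lam A (M.ren (liftRen f))
  | app M N => app (M.ren f) (N.ren f)
  | const c a => const c (fun i => (a i).ren f)

/-- Lift a simultaneous substitution under a binder. -/
def liftSub (σ : ℕ → Tm Sg) : ℕ → Tm Sg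
  | 0 => var 0
  | n + 1 => (σ n).ren Nat.succ

/-- Simultaneous substitution. -/
def sub (σ : ℕ → Tm Sg) : Tm Sg → Tm Sg
  | var n => σ n
  | unit => unit
  | pair M N => pair (M.sub σ) (N.sub σ)
  | fst M => fst (M.sub σ)
  | snd M => snd (M.sub σ)
  | lam A M => lam A (M.sub (liftSub σ))
  | app M N => app (M.sub σ) (N.sub σ)
  | const c a => const c (fun i => (a i).sub σ)

/-- Extension of a substitution by a term (for substituting a single
variable). -/
def cons (M : Tm Sg) (σ : ℕ → Tm Sg) : ℕ → Tm Sg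
  | 0 => M
  | n + 1 => σ n

end Tm

/-- Typing judgement `Γ ⊢ M : A` for λ-terms. -/
inductive HasTy (Sg : Sig1 S) : List (Ty S) → Tm Sg → Ty S → Prop
  | var {Γ : List (Ty S)} {n : ℕ} (h : n < Γ.length) :
      HasTy Sg Γ (.var n) (Γ.get ⟨n, h⟩)
  | unit {Γ} : HasTy Sg Γ .unit .unit
  | pair {Γ M N A B} : HasTy Sg Γ M A → HasTy Sg Γ N B →
      HasTy Sg Γ (.pair M N) (.prod A B)
  | fst {Γ M A B} : HasTy Sg Γ M (.prod A B) → HasTy Sg Γ (.fst M) A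
  | snd {Γ M A B} : HasTy Sg Γ M (.prod A B) → HasTy Sg Γ (.snd M) B
  | lam {Γ M A B} : HasTy Sg (A :: Γ) M B → HasTy Sg Γ (.lam A M) (.arr A B)
  | app {Γ M N A B} : HasTy Sg Γ M (.arr A B) → HasTy Sg Γ N A →
      HasTy Sg Γ (.app M N) B
  | const {Γ} {c : Sg.Op} {args : ℕ → Tm Sg}
      (h : ∀ i (hi : i < (Sg.opCtx c).length),
        HasTy Sg Γ (args i) ((Sg.opCtx c).get ⟨i, hi⟩)) :
      HasTy Sg Γ (.const c args) (Sg.opTy c)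

/-- βη-equivalence of well-typed λ-terms. -/
inductive Beq (Sg : Sig1 S) : List (Ty S) → Tm Sg → Tm Sg → Ty S → Prop
  | refl {Γ M A} : HasTy Sg Γ M A → Beq Sg Γ M M A
  | symm {Γ M N A} : Beq Sg Γ M N A → Beq Sg Γ N M A
  | trans {Γ M N P A} : Beq Sg Γ M N A → Beq Sg Γ N P A → Beq Sg Γ M P A
  | pairCong {Γ M M' N N' A B} : Beq Sg Γ M M' A → Beq Sg Γ N N' B →
      Beq Sg Γ (.pair M N) (.pair M' N') (.prod A B)
  | fstCong {Γ M M' A B} : Beq Sg Γ M M' (.prod A B) →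
      Beq Sg Γ (.fst M) (.fst M') A
  | sndCong {Γ M M' A B} : Beq Sg Γ M M' (.prod A B) →
      Beq Sg Γ (.snd M) (.snd M') B
  | lamCong {Γ M M' A B} : Beq Sg (A :: Γ) M M' B →
      Beq Sg Γ (.lam A M) (.lam A M') (.arr A B)
  | appCong {Γ M M' N N' A B} : Beq Sg Γ M M' (.arr A B) → Beq Sg Γ N N' A →
      Beq Sg Γ (.app M N) (.app M' N') B
  | constCong {Γ} {c : Sg.Op} {args args' : ℕ → Tm Sg}
      (h : ∀ i (hi : i < (Sg.opCtx c).length),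
        Beq Sg Γ (args i) (args' i) ((Sg.opCtx c).get ⟨i, hi⟩)) :
      Beq Sg Γ (.const c args) (.const c args') (Sg.opTy c)
  | beta {Γ M N A B} : HasTy Sg (A :: Γ) M B → HasTy Sg Γ N A →
      Beq Sg Γ (.app (.lam A M) N) (M.sub (Tm.cons N .var)) B
  | eta {Γ M A B} : HasTy Sg Γ M (.arr A B) →
      Beq Sg Γ M (.lam A (.app (M.ren Nat.succ) (.var 0))) (.arr A B)
  | prodBeta1 {Γ M N A B} : HasTy Sg Γ M A → HasTy Sg Γ N B →
      Beq Sg Γ (.fst (.pair M N)) M A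
  | prodBeta2 {Γ M N A B} : HasTy Sg Γ M A → HasTy Sg Γ N B →
      Beq Sg Γ (.snd (.pair M N)) N B
  | prodEta {Γ M A B} : HasTy Sg Γ M (.prod A B) →
      Beq Sg Γ M (.pair (.fst M) (.snd M)) (.prod A B)
  | unitEta {Γ M} : HasTy Sg Γ M .unit → Beq Sg Γ M .unit .unit

/-- A 2-signature: a 1-signature together with a set of reduction rules
between parallel terms. -/
structure Sig2 (S : Type) : Type 1 where
  sig : Sig1 S
  Rule : Type
  ruleCtx : Rule → List (Ty S)
  ruleTy : Rule → Ty S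
  lhs : Rule → Tm sig
  rhs : Rule → Tm sig

/-- Raw reduction terms ("proof terms") over a 1-signature `Sg` and a set `R`
of reduction-rule names.  `vcomp P M Q` is the vertical composite
`P ;_M Q`. -/
inductive Rd (Sg : Sig1 S) (R : Type) : Type
  | var (n : ℕ)
  | unit
  | pair (P Q : Rd Sg R)
  | fst (P : Rd Sg R)
  | snd (P : Rd Sg R)
  | lam (A : Ty S) (P : Rd Sg R)
  | app (P Q : Rd Sg R)
  | const (c : Sg.Op) (args : ℕ → Rd Sg R)
  | rule (r : R) (args : ℕ → Rd Sg R)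
  | vcomp (P : Rd Sg R) (M : Tm Sg) (Q : Rd Sg R)

namespace Rd

variable {Sg : Sig1 S} {R R' : Type}

/-- Every term is an identity reduction on itself. -/
def toRd : Tm Sg → Rd Sg R
  | .var n => var n
  | .unit => unit
  | .pair M N => pair (toRd M) (toRd N)
  | .fst M => fst (toRd M)
  | .snd M => snd (toRd M)
  | .lam A M => lam A (toRd M)
  | .app M N => app (toRd M) (toRd N)
  | .const c a => const c (fun i => toRd (a i))

/-- Renaming of variables in reductions. -/
def ren (f : ℕ → ℕ) : Rd Sg R → Rd Sg R
  | var n => var (f n)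
  | unit => unit
  | pair P Q => pair (P.ren f) (Q.ren f)
  | fst P => fst (P.ren f)
  | snd P => snd (P.ren f)
  | lam A P => lam A (P.ren (Tm.liftRen f))
  | app P Q => app (P.ren f) (Q.ren f)
  | const c a => const c (fun i => (a i).ren f)
  | rule r a => rule r (fun i => (a i).ren f)
  | vcomp P M Q => vcomp (P.ren f) (M.ren f) (Q.ren f)

/-- Relabelling of rule names in a reduction. -/
def mapRule (g : R → R') : Rd Sg R → Rd Sg R'
  | var n => var n
  | unit => unit
  | pair P Q => pair (P.mapRule g) (Q.mapRule g)
  | fst P => fst (P.mapRule g)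
  | snd P => snd (P.mapRule g)
  | lam A P => lam A (P.mapRule g)
  | app P Q => app (P.mapRule g) (Q.mapRule g)
  | const c a => const c (fun i => (a i).mapRule g)
  | rule r a => rule (g r) (fun i => (a i).mapRule g)
  | vcomp P M Q => vcomp (P.mapRule g) M (Q.mapRule g)

/-- Lift a tuple of reductions under a binder. -/
def liftRd (Q : ℕ → Rd Sg R) : ℕ → Rd Sg R
  | 0 => var 0
  | n + 1 => (Q n).ren Nat.succ

/-- Extension of a tuple of reductions by a reduction. -/
def consRd (P : Rd Sg R) (τ : ℕ → Rd Sg R) : ℕ → Rd Sg R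
  | 0 => P
  | n + 1 => τ n

end Rd

/-- Left whiskering `M[Q]` of a term `M` by a tuple of reductions `Q`. -/
def lw {Sg : Sig1 S} {R : Type} (Q : ℕ → Rd Sg R) : Tm Sg → Rd Sg R
  | .var n => Q n
  | .unit => .unit
  | .pair M N => .pair (lw Q M) (lw Q N)
  | .fst M => .fst (lw Q M)
  | .snd M => .snd (lw Q M)
  | .lam A M => .lam A (lw (Rd.liftRd Q) M)
  | .app M N => .app (lw Q M) (lw Q N)
  | .const c a => .const c (fun i => lw Q (a i))

/-- Right whiskering `P[N]` of a reduction `P` by a tuple of terms `N`. -/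
def rw {Sg : Sig1 S} {R : Type} (N : ℕ → Tm Sg) : Rd Sg R → Rd Sg R
  | .var n => Rd.toRd (N n)
  | .unit => .unit
  | .pair P Q => .pair (rw N P) (rw N Q)
  | .fst P => .fst (rw N P)
  | .snd P => .snd (rw N P)
  | .lam A P => .lam A (rw (Tm.liftSub N) P)
  | .app P Q => .app (rw N P) (rw N Q)
  | .const c a => .const c (fun i => rw N (a i))
  | .rule r a => .rule r (fun i => rw N (a i))
  | .vcomp P M Q => .vcomp (rw N P) (M.sub N) (rw N Q)

/-- Substitution of a tuple of reductions `Q : N ⟶ N'` into a reduction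
`P : M ⟶ M'`, defined as `P[N] ;_{M'[N]} M'[Q]`. -/
def rdSub {Sg : Sig1 S} {R : Type} (P : Rd Sg R) (N : ℕ → Tm Sg) (M' : Tm Sg)
    (Q : ℕ → Rd Sg R) : Rd Sg R :=
  .vcomp (rw N P) (M'.sub N) (lw Q M')

/-- The typing judgement `Γ ⊢ P : M ⟶ N : A` for reductions. -/
inductive RdJ (X : Sig2 S) : List (Ty S) → Rd X.sig X.Rule → Tm X.sig → Tm X.sig → Ty S → Prop
  | rule {Γ} {r : X.Rule} {args : ℕ → Rd X.sig X.Rule} {Ms Ns : ℕ → Tm X.sig}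
      (h : ∀ i (hi : i < (X.ruleCtx r).length),
        RdJ X Γ (args i) (Ms i) (Ns i) ((X.ruleCtx r).get ⟨i, hi⟩)) :
      RdJ X Γ (.rule r args) ((X.lhs r).sub Ms) ((X.rhs r).sub Ns) (X.ruleTy r)
  | vcomp {Γ P Q M₁ M₂ M₃ A} : RdJ X Γ P M₁ M₂ A → RdJ X Γ Q M₂ M₃ A →
      RdJ X Γ (.vcomp P M₂ Q) M₁ M₃ A
  | var {Γ : List (Ty S)} {n : ℕ} (h : n < Γ.length) :
      RdJ X Γ (.var n) (.var n) (.var n) (Γ.get ⟨n, h⟩)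
  | unit {Γ} : RdJ X Γ .unit .unit .unit .unit
  | const {Γ} {c : X.sig.Op} {args : ℕ → Rd X.sig X.Rule} {Ms Ns : ℕ → Tm X.sig}
      (h : ∀ i (hi : i < (X.sig.opCtx c).length),
        RdJ X Γ (args i) (Ms i) (Ns i) ((X.sig.opCtx c).get ⟨i, hi⟩)) :
      RdJ X Γ (.const c args) (.const c Ms) (.const c Ns) (X.sig.opTy c)
  | lam {Γ P M N A B} : RdJ X (A :: Γ) P M N B →
      RdJ X Γ (.lam A P) (.lam A M) (.lam A N) (.arr A B)
  | app {Γ P Q M M' N N' A B} : RdJ X Γ P M M' (.arr A B) → RdJ X Γ Q N N' A →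
      RdJ X Γ (.app P Q) (.app M N) (.app M' N') B
  | pair {Γ P Q M M' N N' A B} : RdJ X Γ P M M' A → RdJ X Γ Q N N' B →
      RdJ X Γ (.pair P Q) (.pair M N) (.pair M' N') (.prod A B)
  | fst {Γ P M N A B} : RdJ X Γ P M N (.prod A B) →
      RdJ X Γ (.fst P) (.fst M) (.fst N) A
  | snd {Γ P M N A B} : RdJ X Γ P M N (.prod A B) →
      RdJ X Γ (.snd P) (.snd M) (.snd N) B
  | conv {Γ P M N M' N' A} : RdJ X Γ P M N A → Beq X.sig Γ M M' A →
      Beq X.sig Γ N N' A → RdJ X Γ P M' N' A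

/-- Occurrence of a free variable in a term. -/
def FreeIn {Sg : Sig1 S} : ℕ → Tm Sg → Prop
  | i, .var n => i = n
  | _, .unit => False
  | i, .pair M N => FreeIn i M ∨ FreeIn i N
  | i, .fst M => FreeIn i M
  | i, .snd M => FreeIn i M
  | i, .lam _ M => FreeIn (i + 1) M
  | i, .app M N => FreeIn i M ∨ FreeIn i N
  | i, .const c a => ∃ j, j < (Sg.opCtx c).length ∧ FreeIn i (a j)

/-- A higher-order rewrite system in the sense of Nipkow: a 2-signature
whose rules have well-typed sides, non-variable left-hand sides, base-type
rule types, and all context variables occurring free in the left-hand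
side. -/
def IsHRS (X : Sig2 S) : Prop :=
  ∀ r : X.Rule,
    HasTy X.sig (X.ruleCtx r) (X.lhs r) (X.ruleTy r) ∧
    HasTy X.sig (X.ruleCtx r) (X.rhs r) (X.ruleTy r) ∧
    (∀ n, X.lhs r ≠ .var n) ∧
    (∃ s, X.ruleTy r = .base s) ∧
    (∀ i, i < (X.ruleCtx r).length → FreeIn i (X.lhs r))

/-- The usual rewrite relation `M →* N` of a higher-order rewrite system:
the reflexive-transitive congruence closure (on βη-classes of well-typed
terms) of the substitution instances of the rules. -/
inductive Rw (X : Sig2 S) : List (Ty S) → Tm X.sig → Tm X.sig → Ty S → Prop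
  | refl {Γ M A} : HasTy X.sig Γ M A → Rw X Γ M M A
  | trans {Γ M N P A} : Rw X Γ M N A → Rw X Γ N P A → Rw X Γ M P A
  | step {Γ} (r : X.Rule) (σ : ℕ → Tm X.sig)
      (h : ∀ i (hi : i < (X.ruleCtx r).length),
        HasTy X.sig Γ (σ i) ((X.ruleCtx r).get ⟨i, hi⟩)) :
      Rw X Γ ((X.lhs r).sub σ) ((X.rhs r).sub σ) (X.ruleTy r)
  | pairCong {Γ M M' N N' A B} : Rw X Γ M M' A → Rw X Γ N N' B →
      Rw X Γ (.pair M N) (.pair M' N') (.prod A B)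
  | fstCong {Γ M M' A B} : Rw X Γ M M' (.prod A B) → Rw X Γ (.fst M) (.fst M') A
  | sndCong {Γ M M' A B} : Rw X Γ M M' (.prod A B) → Rw X Γ (.snd M) (.snd M') B
  | lamCong {Γ M M' A B} : Rw X (A :: Γ) M M' B →
      Rw X Γ (.lam A M) (.lam A M') (.arr A B)
  | appCong {Γ M M' N N' A B} : Rw X Γ M M' (.arr A B) → Rw X Γ N N' A →
      Rw X Γ (.app M N) (.app M' N') B
  | constCong {Γ} {c : X.sig.Op} {args args' : ℕ → Tm X.sig}
      (h : ∀ i (hi : i < (X.sig.opCtx c).length),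
        Rw X Γ (args i) (args' i) ((X.sig.opCtx c).get ⟨i, hi⟩)) :
      Rw X Γ (.const c args) (.const c args') (X.sig.opTy c)
  | conv {Γ M N M' N' A} : Rw X Γ M N A → Beq X.sig Γ M M' A →
      Beq X.sig Γ N N' A → Rw X Γ M' N' A

section Aux

variable {Sg : Sig1 S}

lemma liftRen_comp (f g : ℕ → ℕ) :
    Tm.liftRen g ∘ Tm.liftRen f = Tm.liftRen (g ∘ f) := by
  funext n; cases n <;> rfl

lemma ren_ren (M : Tm Sg) : ∀ f g, (M.ren f).ren g = M.ren (g ∘ f) := by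
  induction M with
  | var n => intros; rfl
  | unit => intros; rfl
  | pair M N ihM ihN => intro f g; simp [Tm.ren, ihM, ihN]
  | fst M ih => intro f g; simp [Tm.ren, ih]
  | snd M ih => intro f g; simp [Tm.ren, ih]
  | lam A M ih => intro f g; simp [Tm.ren, ih, liftRen_comp]
  | app M N ihM ihN => intro f g; simp [Tm.ren, ihM, ihN]
  | const c a ih => intro f g; simp [Tm.ren]; funext i; exact ih i f g

lemma sub_ren (M : Tm Sg) : ∀ (f : ℕ → ℕ) (σ : ℕ → Tm Sg),
    (M.ren f).sub σ = M.sub (σ ∘ f) := by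
  induction M with
  | var n => intros; rfl
  | unit => intros; rfl
  | pair M N ihM ihN => intro f σ; simp [Tm.ren, Tm.sub, ihM, ihN]
  | fst M ih => intro f σ; simp [Tm.ren, Tm.sub, ih]
  | snd M ih => intro f σ; simp [Tm.ren, Tm.sub, ih]
  | lam A M ih =>
      intro f σ; simp [Tm.ren, Tm.sub, ih]
      congr 1; funext n; cases n <;> rfl
  | app M N ihM ihN => intro f σ; simp [Tm.ren, Tm.sub, ihM, ihN]
  | const c a ih => intro f σ; simp [Tm.ren, Tm.sub]; funext i; exact ih i f σ

lemma ren_sub (M : Tm Sg) : ∀ (σ : ℕ → Tm Sg) (f : ℕ → ℕ),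
    (M.sub σ).ren f = M.sub (fun n => (σ n).ren f) := by
  induction M with
  | var n => intros; rfl
  | unit => intros; rfl
  | pair M N ihM ihN => intro σ f; simp [Tm.ren, Tm.sub, ihM, ihN]
  | fst M ih => intro σ f; simp [Tm.ren, Tm.sub, ih]
  | snd M ih => intro σ f; simp [Tm.ren, Tm.sub, ih]
  | lam A M ih =>
      intro σ f; simp [Tm.ren, Tm.sub, ih]
      congr 1; funext n
      cases n with
      | zero => rfl
      | succ n =>
          show ((σ n).ren Nat.succ).ren (Tm.liftRen f)
              = ((σ n).ren f).ren Nat.succ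
          rw [ren_ren, ren_ren]
          congr 1
  | app M N ihM ihN => intro σ f; simp [Tm.ren, Tm.sub, ihM, ihN]
  | const c a ih => intro σ f; simp [Tm.ren, Tm.sub]; funext i; exact ih i σ f

/-- `f` is a typed renaming from `Γ` to `Δ`. -/
def RenOk (f : ℕ → ℕ) (Γ Δ : List (Ty S)) : Prop :=
  ∀ n (h : n < Γ.length), ∃ h' : f n < Δ.length,
    Δ.get ⟨f n, h'⟩ = Γ.get ⟨n, h⟩

lemma RenOk.lift {f : ℕ → ℕ} {Γ Δ : List (Ty S)} (hf : RenOk f Γ Δ)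
    (A : Ty S) : RenOk (Tm.liftRen f) (A :: Γ) (A :: Δ) := by
  intro n h
  cases n with
  | zero => exact ⟨Nat.succ_pos _, rfl⟩
  | succ n =>
      obtain ⟨h', e⟩ := hf n (Nat.lt_of_succ_lt_succ h)
      exact ⟨Nat.succ_lt_succ h', e⟩

lemma RenOk.succ (Γ : List (Ty S)) (A : Ty S) :
    RenOk Nat.succ Γ (A :: Γ) :=
  fun n h => ⟨Nat.succ_lt_succ h, rfl⟩

lemma hasTy_ren {Γ M A} (h : HasTy Sg Γ M A) :
    ∀ {Δ f}, RenOk f Γ Δ → HasTy Sg Δ (M.ren f) A := by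
  induction h with
  | var h =>
      intro Δ f hf
      obtain ⟨h', e⟩ := hf _ h
      exact e ▸ HasTy.var h'
  | unit => intro Δ f hf; exact HasTy.unit
  | pair _ _ ih1 ih2 => intro Δ f hf; exact HasTy.pair (ih1 hf) (ih2 hf)
  | fst _ ih => intro Δ f hf; exact HasTy.fst (ih hf)
  | snd _ ih => intro Δ f hf; exact HasTy.snd (ih hf)
  | lam _ ih => intro Δ f hf; exact HasTy.lam (ih (hf.lift _))
  | app _ _ ih1 ih2 => intro Δ f hf; exact HasTy.app (ih1 hf) (ih2 hf)
  | const h ih => intro Δ f hf; exact HasTy.const fun i hi => ih i hi hf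

lemma beta_ren_eq (M N : Tm Sg) (f : ℕ → ℕ) :
    (M.sub (Tm.cons N Tm.var)).ren f
      = (M.ren (Tm.liftRen f)).sub (Tm.cons (N.ren f) Tm.var) := by
  rw [ren_sub, sub_ren]
  congr 1; funext n; cases n <;> rfl

lemma eta_ren_eq (M : Tm Sg) (f : ℕ → ℕ) :
    (M.ren Nat.succ).ren (Tm.liftRen f) = (M.ren f).ren Nat.succ := by
  rw [ren_ren, ren_ren]; congr 1

lemma beq_ren {Γ M N A} (h : Beq Sg Γ M N A) :
    ∀ {Δ f}, RenOk f Γ Δ → Beq Sg Δ (M.ren f) (N.ren f) A := by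
  induction h with
  | refl h => intro Δ f hf; exact Beq.refl (hasTy_ren h hf)
  | symm _ ih => intro Δ f hf; exact (ih hf).symm
  | trans _ _ ih1 ih2 => intro Δ f hf; exact (ih1 hf).trans (ih2 hf)
  | pairCong _ _ ih1 ih2 => intro Δ f hf; exact Beq.pairCong (ih1 hf) (ih2 hf)
  | fstCong _ ih => intro Δ f hf; exact Beq.fstCong (ih hf)
  | sndCong _ ih => intro Δ f hf; exact Beq.sndCong (ih hf)
  | lamCong _ ih => intro Δ f hf; exact Beq.lamCong (ih (hf.lift _))
  | appCong _ _ ih1 ih2 => intro Δ f hf; exact Beq.appCong (ih1 hf) (ih2 hf)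
  | constCong h ih =>
      intro Δ f hf; exact Beq.constCong fun i hi => ih i hi hf
  | beta hM hN =>
      intro Δ f hf
      rw [show ((Tm.app (Tm.lam _ _) _).ren f) =
        Tm.app (Tm.lam _ (Tm.ren (Tm.liftRen f) _)) (Tm.ren f _) from rfl,
        beta_ren_eq]
      exact Beq.beta (hasTy_ren hM (hf.lift _)) (hasTy_ren hN hf)
  | eta hM =>
      intro Δ f hf
      have := Beq.eta (A := _) (B := _) (hasTy_ren hM hf)
      simpa [Tm.ren, eta_ren_eq, Tm.liftRen] using this
  | prodBeta1 hM hN =>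
      intro Δ f hf; exact Beq.prodBeta1 (hasTy_ren hM hf) (hasTy_ren hN hf)
  | prodBeta2 hM hN =>
      intro Δ f hf; exact Beq.prodBeta2 (hasTy_ren hM hf) (hasTy_ren hN hf)
  | prodEta hM => intro Δ f hf; exact Beq.prodEta (hasTy_ren hM hf)
  | unitEta hM => intro Δ f hf; exact Beq.unitEta (hasTy_ren hM hf)

lemma rw_ren {X : Sig2 S} {Γ M N A} (h : Rw X Γ M N A) :
    ∀ {Δ f}, RenOk f Γ Δ → Rw X Δ (M.ren f) (N.ren f) A := by
  induction h with
  | refl h => intro Δ f hf; exact Rw.refl (hasTy_ren h hf)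
  | trans _ _ ih1 ih2 => intro Δ f hf; exact (ih1 hf).trans (ih2 hf)
  | step r σ hσ =>
      intro Δ f hf
      rw [ren_sub, ren_sub]
      exact Rw.step r (fun i => (σ i).ren f)
        (fun i hi => hasTy_ren (hσ i hi) hf)
  | pairCong _ _ ih1 ih2 => intro Δ f hf; exact Rw.pairCong (ih1 hf) (ih2 hf)
  | fstCong _ ih => intro Δ f hf; exact Rw.fstCong (ih hf)
  | sndCong _ ih => intro Δ f hf; exact Rw.sndCong (ih hf)
  | lamCong _ ih => intro Δ f hf; exact Rw.lamCong (ih (hf.lift _))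
  | appCong _ _ ih1 ih2 => intro Δ f hf; exact Rw.appCong (ih1 hf) (ih2 hf)
  | constCong h ih => intro Δ f hf; exact Rw.constCong fun i hi => ih i hi hf
  | conv _ h1 h2 ih =>
      intro Δ f hf; exact (ih hf).conv (beq_ren h1 hf) (beq_ren h2 hf)

end Aux

/-- For a higher-order rewrite system `X`, the locally-preordered
2-category `R(X)` — objects the types over the sorts of `X`, morphisms
λ-terms modulo βη, and a (unique) 2-cell `M → N` exactly when `M` rewrites
to `N` — is cartesian closed as a 2-category: its hom-preorders satisfy the
universal properties of the terminal object, of binary products, and of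
exponentials. -/
theorem rewriting_2category_cartesian_closed (X : Sig2 S) (hX : IsHRS X) :
    -- terminal object: each hom-category C(Γ, 1) is isomorphic to the
    -- terminal category
    (∀ (Γ : List (Ty S)) (M N : Tm X.sig),
      HasTy X.sig Γ M .unit → HasTy X.sig Γ N .unit →
      Beq X.sig Γ M N .unit ∧ Rw X Γ M N .unit) ∧
    -- binary products: C(Γ, A × B) ≅ C(Γ, A) × C(Γ, B) as preorders,
    -- via the projections
    (∀ (Γ : List (Ty S)) (A B : Ty S) (M N : Tm X.sig),
      HasTy X.sig Γ M (.prod A B) → HasTy X.sig Γ N (.prod A B) →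
      (Rw X Γ M N (.prod A B) ↔
        Rw X Γ (.fst M) (.fst N) A ∧ Rw X Γ (.snd M) (.snd N) B)) ∧
    -- exponentials: C(Γ, B^A) ≅ C(A × Γ, B) as preorders, via evaluation
    (∀ (Γ : List (Ty S)) (A B : Ty S) (M N : Tm X.sig),
      HasTy X.sig Γ M (.arr A B) → HasTy X.sig Γ N (.arr A B) →
      (Rw X Γ M N (.arr A B) ↔
        Rw X (A :: Γ) (.app (M.ren Nat.succ) (.var 0))
          (.app (N.ren Nat.succ) (.var 0)) B)) :=by
  refine ⟨?_, ?_, ?_⟩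
  · intro Γ M N hM hN
    refine ⟨(Beq.unitEta hM).trans (Beq.unitEta hN).symm, ?_⟩
    exact (Rw.refl HasTy.unit).conv (Beq.unitEta hM).symm (Beq.unitEta hN).symm
  · intro Γ A B M N hM hN
    constructor
    · intro h; exact ⟨Rw.fstCong h, Rw.sndCong h⟩
    · rintro ⟨h1, h2⟩
      exact (Rw.pairCong h1 h2).conv (Beq.prodEta hM).symm (Beq.prodEta hN).symm
  · intro Γ A B M N hM hN
    constructor
    · intro h
      have h0 : HasTy X.sig (A :: Γ) (.var 0) A := HasTy.var (by simp)
      exact Rw.appCong (rw_ren h (RenOk.succ Γ A)) (Rw.refl h0)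
    · intro h
      exact (Rw.lamCong h).conv (Beq.eta hM).symm (Beq.eta hN).symm
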